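/- Let Y be a geodesic metric space and X = Y × ℝ with the product metric d((y,s),(y',s')) = √(d_Y(y,y')² + |s−s'|²). Then X is non-branching if and only if Y is non-branching. -/

import Mathlib

open Set

/-- `γ` is a constant-speed geodesic parametrized on `[0,1]`. -/
def IsGeodesicParam {X : Type*} [MetricSpace X] (γ : ℝ → X) : Prop :=
  ∃ L : ℝ, 0 ≤ L ∧ ∀ s ∈ Icc (0:ℝ) 1, ∀ t ∈ Icc (0:ℝ) 1, dist (γ s) (γ t) = L * |s - t|

/-- A metric space is non-branching: two geodesics on `[0,1]` that agree on a nontrivial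
initial segment agree everywhere. -/
def NonBranching (X : Type*) [MetricSpace X] : Prop :=
  ∀ γ₁ γ₂ : ℝ → X, IsGeodesicParam γ₁ → IsGeodesicParam γ₂ →
    ∀ ε ∈ Ioo (0:ℝ) 1, (∀ t ∈ Icc (0:ℝ) ε, γ₁ t = γ₂ t) → ∀ t ∈ Icc (0:ℝ) 1, γ₁ t = γ₂ t

private lemma eq_of_sq_eq_sq' {x y : ℝ} (hx : 0 ≤ x) (hy : 0 ≤ y) (h : x^2 = y^2) : x = y := by
  apply le_antisymm <;> nlinarith

private lemma dist_sq_L2 {α β : Type*} [PseudoMetricSpace α] [PseudoMetricSpace β]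
    (x y : WithLp 2 (α × β)) :
    dist x y ^ 2 = dist x.fst y.fst ^ 2 + dist x.snd y.snd ^ 2 := by
  have e : ∀ d : ℝ, d ^ (2:ℝ) = d ^ 2 := fun d => by
    rw [show (2:ℝ) = ((2:ℕ):ℝ) by norm_num, Real.rpow_natCast]
  have h : dist x y = (dist x.fst y.fst ^ (2:ℝ) + dist x.snd y.snd ^ (2:ℝ)) ^ (1/(2:ℝ)) := by
    have := WithLp.prod_dist_eq_add (p := 2) (α := α) (β := β) (by norm_num) x y
    simpa using this
  have hnn : (0:ℝ) ≤ dist x.fst y.fst ^ (2:ℝ) + dist x.snd y.snd ^ (2:ℝ) := by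
    rw [e, e]; positivity
  rw [h, ← Real.rpow_natCast _ 2, ← Real.rpow_mul hnn]
  norm_num [e]

set_option maxHeartbeats 1000000 in
private lemma key_scalar {A B p1 q1 p2 q2 F G : ℝ}
    (hA : 0 ≤ A) (hB : 0 ≤ B) (hp1 : 0 ≤ p1) (hq1 : 0 ≤ q1)
    (hp2 : 0 ≤ p2) (hq2 : 0 ≤ q2) (hF0 : 0 ≤ F) (hG0 : 0 ≤ G)
    (h1 : p1^2 + q1^2 = A^2) (h2 : p2^2 + q2^2 = B^2)
    (h3 : F^2 + G^2 = (A+B)^2) (hF : F ≤ p1 + p2) (hG : G ≤ q1 + q2) :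
    F = p1 + p2 ∧ G = q1 + q2 ∧ (A+B) * p1 = A * F ∧ (A+B) * q1 = A * G := by
  have hcs : p1*p2 + q1*q2 ≤ A*B := by
    nlinarith [sq_nonneg (p1*q2 - p2*q1), mul_nonneg hA hB,
      mul_nonneg hp1 hp2, mul_nonneg hq1 hq2]
  have hub : (p1+p2)^2 + (q1+q2)^2 ≤ (A+B)^2 := by nlinarith
  have hP : F = p1 + p2 := by
    have : p1 + p2 ≤ F := by nlinarith
    linarith
  have hQ : G = q1 + q2 := by
    have : q1 + q2 ≤ G := by nlinarith
    linarith
  have hceq : p1*p2 + q1*q2 = A*B := by nlinarith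
  have hdet : p1*q2 = p2*q1 := by
    have h0 : (p1*q2 - p2*q1)^2 = 0 := by nlinarith
    have := pow_eq_zero_iff (n := 2) (by norm_num) |>.mp h0
    linarith
  have hpg : p1 * G = q1 * F := by
    rw [hP, hQ]; ring_nf; linarith [hdet]
  refine ⟨hP, hQ, ?_, ?_⟩
  · refine eq_of_sq_eq_sq' (mul_nonneg (by linarith) hp1) (mul_nonneg hA hF0) ?_
    linear_combination p1^2*h3.symm - F^2*h1.symm + (p1*G+q1*F)*hpg
  · refine eq_of_sq_eq_sq' (mul_nonneg (by linarith) hq1) (mul_nonneg hA hG0) ?_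
    linear_combination q1^2*h3.symm - G^2*h1.symm - (p1*G+q1*F)*hpg

set_option maxHeartbeats 1000000 in
private lemma decomp {Y : Type*} [MetricSpace Y] (Γ : ℝ → WithLp 2 (Y × ℝ))
    (L : ℝ) (hL : 0 ≤ L)
    (hΓ : ∀ s ∈ Icc (0:ℝ) 1, ∀ t ∈ Icc (0:ℝ) 1, dist (Γ s) (Γ t) = L * |s - t|) :
    (∀ u ∈ Icc (0:ℝ) 1, ∀ v ∈ Icc (0:ℝ) 1,
      dist (Γ u).fst (Γ v).fst = dist (Γ 0).fst (Γ 1).fst * |u - v|) ∧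
    (∀ t ∈ Icc (0:ℝ) 1, (Γ t).snd = (Γ 0).snd + t * ((Γ 1).snd - (Γ 0).snd)) := by
  have hsq : ∀ u ∈ Icc (0:ℝ) 1, ∀ v ∈ Icc (0:ℝ) 1,
      dist (Γ u).fst (Γ v).fst ^ 2 + dist (Γ u).snd (Γ v).snd ^ 2 = (L * |u - v|)^2 := by
    intro u hu v hv
    have h := dist_sq_L2 (Γ u) (Γ v)
    rw [hΓ u hu v hv] at h
    linarith
  -- key triple fact
  have key1 : ∀ a b c : ℝ, 0 ≤ a → a ≤ b → b ≤ c → c ≤ 1 →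
      dist (Γ a).fst (Γ c).fst = dist (Γ a).fst (Γ b).fst + dist (Γ b).fst (Γ c).fst ∧
      dist (Γ a).snd (Γ c).snd = dist (Γ a).snd (Γ b).snd + dist (Γ b).snd (Γ c).snd ∧
      (c - a) * dist (Γ a).fst (Γ b).fst = (b - a) * dist (Γ a).fst (Γ c).fst ∧
      (c - a) * dist (Γ a).snd (Γ b).snd = (b - a) * dist (Γ a).snd (Γ c).snd := by
    intro a b c ha hab hbc hc1
    have hax : a ∈ Icc (0:ℝ) 1 := ⟨ha, by linarith⟩
    have hbx : b ∈ Icc (0:ℝ) 1 := ⟨by linarith, by linarith⟩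
    have hcx : c ∈ Icc (0:ℝ) 1 := ⟨by linarith, hc1⟩
    have e1 := hsq a hax b hbx
    have e2 := hsq b hbx c hcx
    have e3 := hsq a hax c hcx
    rw [abs_of_nonpos (by linarith)] at e1 e2 e3
    have h1 : dist (Γ a).fst (Γ b).fst ^2 + dist (Γ a).snd (Γ b).snd ^2 = (L*(b-a))^2 := by
      rw [e1]; ring
    have h2 : dist (Γ b).fst (Γ c).fst ^2 + dist (Γ b).snd (Γ c).snd ^2 = (L*(c-b))^2 := by
      rw [e2]; ring
    have h3 : dist (Γ a).fst (Γ c).fst ^2 + dist (Γ a).snd (Γ c).snd ^2 = (L*(b-a) + L*(c-b))^2 := by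
      rw [e3]; ring
    obtain ⟨k1, k2, k3, k4⟩ := key_scalar (A := L*(b-a)) (B := L*(c-b))
      (mul_nonneg hL (by linarith)) (mul_nonneg hL (by linarith)) dist_nonneg dist_nonneg dist_nonneg dist_nonneg
      dist_nonneg dist_nonneg h1 h2 h3 (dist_triangle _ _ _) (dist_triangle _ _ _)
    rcases eq_or_lt_of_le hL with hL0 | hL0
    · have hz : ∀ x ∈ Icc (0:ℝ) 1, ∀ y ∈ Icc (0:ℝ) 1,
          dist (Γ x).fst (Γ y).fst = 0 ∧ dist (Γ x).snd (Γ y).snd = 0 := by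
        intro x hx y hy
        have := hsq x hx y hy
        rw [← hL0] at this
        constructor <;> nlinarith [dist_nonneg (x := (Γ x).fst) (y := (Γ y).fst),
          dist_nonneg (x := (Γ x).snd) (y := (Γ y).snd), sq_nonneg (dist (Γ x).fst (Γ y).fst),
          sq_nonneg (dist (Γ x).snd (Γ y).snd)]
      obtain ⟨z1, z2⟩ := hz a hax b hbx
      obtain ⟨z3, z4⟩ := hz b hbx c hcx
      obtain ⟨z5, z6⟩ := hz a hax c hcx
      rw [z1, z2, z3, z4, z5, z6]
      norm_num
    · refine ⟨k1, k2, ?_, ?_⟩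
      · have hLne : L ≠ 0 := ne_of_gt hL0
        refine mul_left_cancel₀ hLne ?_
        linear_combination k3
      · have hLne : L ≠ 0 := ne_of_gt hL0
        refine mul_left_cancel₀ hLne ?_
        linear_combination k4
  -- distances from 0
  have hD0 : ∀ v ∈ Icc (0:ℝ) 1, dist (Γ 0).fst (Γ v).fst = v * dist (Γ 0).fst (Γ 1).fst ∧
      dist (Γ 0).snd (Γ v).snd = v * dist (Γ 0).snd (Γ 1).snd := by
    intro v hv
    obtain ⟨_, _, k3, k4⟩ := key1 0 v 1 le_rfl hv.1 hv.2 le_rfl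
    simp only [sub_zero, one_mul] at k3 k4
    constructor <;> linarith
  have hDgen : ∀ u v : ℝ, 0 ≤ u → u ≤ v → v ≤ 1 →
      dist (Γ u).fst (Γ v).fst = (v - u) * dist (Γ 0).fst (Γ 1).fst := by
    intro u v hu huv hv
    obtain ⟨k1, _, _, _⟩ := key1 0 u v le_rfl hu huv hv
    have h1 := (hD0 u ⟨hu, by linarith⟩).1
    have h2 := (hD0 v ⟨by linarith, hv⟩).1
    rw [h1, h2] at k1
    linear_combination -k1
  constructor
  · intro u hu v hv
    rcases le_total u v with h | h
    · rw [hDgen u v hu.1 h hv.2, abs_of_nonpos (by linarith)]; ring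
    · rw [dist_comm, hDgen v u hv.1 h hu.2, abs_of_nonneg (by linarith)]; ring
  · intro t ht
    have h1 := (hD0 t ht).2
    obtain ⟨_, k2, _, _⟩ := key1 0 t 1 le_rfl ht.1 ht.2 le_rfl
    simp only [Real.dist_eq] at h1 k2
    have e1 : ((Γ t).snd - (Γ 0).snd)^2 = t^2 * ((Γ 1).snd - (Γ 0).snd)^2 := by
      have := congrArg (·^2) h1
      simp only [mul_pow, sq_abs] at this
      linear_combination this
    have h2 : |(Γ t).snd - (Γ 1).snd| = (1-t) * |(Γ 0).snd - (Γ 1).snd| := by linarith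
    have e2 : ((Γ 1).snd - (Γ t).snd)^2 = (1-t)^2 * ((Γ 1).snd - (Γ 0).snd)^2 := by
      have := congrArg (·^2) h2
      simp only [mul_pow, sq_abs] at this
      linear_combination this
    have hac : ((Γ t).snd - (Γ 0).snd) * ((Γ 1).snd - (Γ 0).snd)
        = t * ((Γ 1).snd - (Γ 0).snd)^2 := by
      linear_combination (1/2)*e1 - (1/2)*e2
    have hz : (((Γ t).snd - (Γ 0).snd) - t*((Γ 1).snd - (Γ 0).snd))^2 = 0 := by
      linear_combination e1 - 2*t*hac
    have h0 : ((Γ t).snd - (Γ 0).snd) - t*((Γ 1).snd - (Γ 0).snd) = 0 :=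
      pow_eq_zero_iff (n := 2) (by norm_num) |>.mp hz
    linarith

/-- For a geodesic metric space `Y`, the `ℓ²`-product `Y × ℝ` is non-branching if and only if
`Y` is non-branching. -/
theorem product_nonbranching_iff {Y : Type*} [MetricSpace Y]
    (hgeo : ∀ y y' : Y, ∃ γ : ℝ → Y, γ 0 = y ∧ γ 1 = y' ∧
      ∀ s ∈ Icc (0:ℝ) 1, ∀ t ∈ Icc (0:ℝ) 1, dist (γ s) (γ t) = dist y y' * |s - t|) :
    NonBranching (WithLp 2 (Y × ℝ)) ↔ NonBranching Y := by
  constructor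
  · intro hX γ₁ γ₂ hg1 hg2 ε hε hagree t ht
    set Γ₁ : ℝ → WithLp 2 (Y × ℝ) := fun t => (WithLp.equiv 2 (Y × ℝ)).symm (γ₁ t, 0) with hΓ1
    set Γ₂ : ℝ → WithLp 2 (Y × ℝ) := fun t => (WithLp.equiv 2 (Y × ℝ)).symm (γ₂ t, 0) with hΓ2
    have hdist : ∀ (γ : ℝ → Y) (u v : ℝ),
        dist ((WithLp.equiv 2 (Y × ℝ)).symm (γ u, 0)) ((WithLp.equiv 2 (Y × ℝ)).symm (γ v, 0))
          = dist (γ u) (γ v) := by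
      intro γ u v
      refine eq_of_sq_eq_sq' dist_nonneg dist_nonneg ?_
      rw [dist_sq_L2]
      simp
    have hG1 : IsGeodesicParam Γ₁ := by
      obtain ⟨L, hL, h⟩ := hg1
      exact ⟨L, hL, fun s hs t' ht' => by rw [hΓ1]; simp only; rw [hdist, h s hs t' ht']⟩
    have hG2 : IsGeodesicParam Γ₂ := by
      obtain ⟨L, hL, h⟩ := hg2
      exact ⟨L, hL, fun s hs t' ht' => by rw [hΓ2]; simp only; rw [hdist, h s hs t' ht']⟩
    have := hX Γ₁ Γ₂ hG1 hG2 ε hε (fun u hu => by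
      rw [hΓ1, hΓ2]; simp only; rw [hagree u hu]) t ht
    have := congrArg (fun x => (WithLp.equiv 2 (Y × ℝ) x).1) this
    simpa [hΓ1, hΓ2] using this
  · rintro hY Γ₁ Γ₂ ⟨L1, hL1, h1⟩ ⟨L2, hL2, h2⟩ ε hε hagree t ht
    obtain ⟨hd1, hs1⟩ := decomp Γ₁ L1 hL1 h1
    obtain ⟨hd2, hs2⟩ := decomp Γ₂ L2 hL2 h2
    have hy : ∀ u ∈ Icc (0:ℝ) 1, (Γ₁ u).fst = (Γ₂ u).fst := by
      apply hY (fun u => (Γ₁ u).fst) (fun u => (Γ₂ u).fst)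
        ⟨dist (Γ₁ 0).fst (Γ₁ 1).fst, dist_nonneg, hd1⟩
        ⟨dist (Γ₂ 0).fst (Γ₂ 1).fst, dist_nonneg, hd2⟩ ε hε
      intro u hu
      exact congrArg WithLp.fst (hagree u hu)
    have hε1 : ε ∈ Icc (0:ℝ) 1 := ⟨hε.1.le, hε.2.le⟩
    have h0 : Γ₁ 0 = Γ₂ 0 := hagree 0 ⟨le_rfl, hε.1.le⟩
    have hεe : Γ₁ ε = Γ₂ ε := hagree ε ⟨hε.1.le, le_rfl⟩
    have hslope : (Γ₁ 1).snd - (Γ₁ 0).snd = (Γ₂ 1).snd - (Γ₂ 0).snd := by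
      have e1 := hs1 ε hε1
      have e2 := hs2 ε hε1
      have h02 : (Γ₁ 0).snd = (Γ₂ 0).snd := congrArg WithLp.snd h0
      have hε2 : (Γ₁ ε).snd = (Γ₂ ε).snd := congrArg WithLp.snd hεe
      rw [e1, e2] at hε2
      have key : ε * ((Γ₁ 1).snd - (Γ₁ 0).snd) = ε * ((Γ₂ 1).snd - (Γ₂ 0).snd) := by
        linear_combination hε2 - h02
      exact mul_left_cancel₀ (ne_of_gt hε.1) key
    have hs : (Γ₁ t).snd = (Γ₂ t).snd := by
      rw [hs1 t ht, hs2 t ht, hslope, congrArg WithLp.snd h0]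
    exact WithLp.ofLp_injective 2 (Prod.ext (hy t ht) hs)
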